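/- For the group-similarity corrupted affinity matrix W̃ and each block j ≠ i, the value (N_j w_j + N_i w̃_{i,j})/d̃_j is a generalized eigenvalue of the pair (L̃, D̃) with geometric multiplicity at least N_j − 1; that is, the kernel of L̃ − ((N_j w_j + N_i w̃_{i,j})/d̃_j) D̃ has dimension at least N_j − 1. -/

import Mathlib

open Finset in
/-- Cardinality of each block. -/
lemma block_card_aux (K N : ℕ) (n : Fin K → ℕ) (hN : N = ∑ i, n i)
    (β : Fin N → Fin K)
    (hβ : ∀ m : Fin N,
      (∑ k ∈ Finset.univ.filter (fun k => k < β m), n k) ≤ m.val ∧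
      m.val < (∑ k ∈ Finset.univ.filter (fun k => k < β m), n k) + n (β m))
    (k : Fin K) :
    (Finset.univ.filter (fun m => β m = k)).card = n k := by
  set off : Fin K → ℕ := fun k => ∑ t ∈ Finset.univ.filter (fun t => t < k), n t with hoff
  have hmono : ∀ a b : Fin K, a < b → off a + n a ≤ off b := by
    intro a b hab
    have hsub : insert a (Finset.univ.filter (fun t => t < a)) ⊆
        Finset.univ.filter (fun t => t < b) := by
      intro t ht
      simp only [Finset.mem_insert, Finset.mem_filter, Finset.mem_univ, true_and] at ht ⊢
      rcases ht with rfl | ht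
      · exact hab
      · exact ht.trans hab
    have hna : a ∉ Finset.univ.filter (fun t => t < a) := by simp
    calc off a + n a = ∑ t ∈ insert a (Finset.univ.filter (fun t => t < a)), n t := by
          rw [Finset.sum_insert hna]; ring
      _ ≤ off b := Finset.sum_le_sum_of_subset hsub
  have hub : ∀ a : Fin K, off a + n a ≤ N := by
    intro a
    have hna : a ∉ Finset.univ.filter (fun t => t < a) := by simp
    calc off a + n a = ∑ t ∈ insert a (Finset.univ.filter (fun t => t < a)), n t := by
          rw [Finset.sum_insert hna]; ring
      _ ≤ ∑ t, n t := Finset.sum_le_sum_of_subset (Finset.subset_univ _)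
      _ = N := hN.symm
  have hβ' : ∀ m : Fin N, off (β m) ≤ m.val ∧ m.val < off (β m) + n (β m) := fun m => hβ m
  have hiff : ∀ m : Fin N, β m = k ↔ off k ≤ m.val ∧ m.val < off k + n k := by
    intro m
    constructor
    · intro h; have := hβ' m; rw [h] at this; exact this
    · rintro ⟨h1, h2⟩
      by_contra hne
      rcases lt_or_gt_of_ne hne with hlt | hgt
      · have h3 := hmono _ _ hlt
        have h4 := (hβ' m).2
        omega
      · have h3 := hmono _ _ hgt
        have h4 := (hβ' m).1
        omega
  have : (Finset.univ.filter (fun m => β m = k)).card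
      = (Finset.Ico (off k) (off k + n k)).card := by
    refine Finset.card_bij' (fun m _ => m.val)
      (fun x hx => (⟨x, lt_of_lt_of_le (Finset.mem_Ico.mp hx).2 (hub k)⟩ : Fin N))
      ?_ ?_ ?_ ?_
    · intro m hm
      simp only [Finset.mem_filter, Finset.mem_univ, true_and] at hm
      exact Finset.mem_Ico.mpr ((hiff m).mp hm)
    · intro x hx
      simp only [Finset.mem_filter, Finset.mem_univ, true_and]
      exact (hiff _).mpr (Finset.mem_Ico.mp hx)
    · intro m hm; rfl
    · intro x hx; rfl
  rw [this, Nat.card_Ico]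
  omega

/-- For the group-similarity corrupted affinity matrix `W̃` and each block
`j ≠ i`, the value `(n j * w j + n i * w̃ i j) / d̃ j` is a generalized eigenvalue of the
pair `(L̃, D̃)` with geometric multiplicity at least `n j - 1`. -/
theorem groupSim_generalized_eigenvalue_other_blocks
    (K : ℕ) (hK : 2 ≤ K)
    (n : Fin K → ℕ) (hn : ∀ i, 2 ≤ n i)
    (w : Fin K → ℝ) (hw : ∀ i, 0 < w i)
    (N : ℕ) (hN : N = ∑ i, n i)
    (β : Fin N → Fin K)
    (hβ : ∀ m : Fin N,
      (∑ k ∈ Finset.univ.filter (fun k => k < β m), n k) ≤ m.val ∧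
      m.val < (∑ k ∈ Finset.univ.filter (fun k => k < β m), n k) + n (β m))
    (W : Matrix (Fin N) (Fin N) ℝ)
    (hW : ∀ m p, W m p = if m ≠ p ∧ β m = β p then w (β m) else 0)
    (i : Fin K)
    (wt : Fin K → ℝ) (hwt : ∀ j, j ≠ i → 0 < wt j)
    (Wt : Matrix (Fin N) (Fin N) ℝ)
    (hWt : ∀ m p, Wt m p =
      if β m = β p then W m p
      else if β m = i then wt (β p)
      else if β p = i then wt (β m)
      else 0)
    (Dt : Matrix (Fin N) (Fin N) ℝ)
    (hDt : Dt = Matrix.diagonal (fun m => ∑ p, Wt m p))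
    (Lt : Matrix (Fin N) (Fin N) ℝ)
    (hLt : Lt = Dt - Wt)
    (dt : Fin K → ℝ)
    (hdtj : ∀ j, j ≠ i → dt j = ((n j : ℝ) - 1) * w j + (n i : ℝ) * wt j)
    (hdti : dt i = ((n i : ℝ) - 1) * w i + ∑ j ∈ Finset.univ.erase i, (n j : ℝ) * wt j) :
    ∀ j : Fin K, j ≠ i →
      n j - 1 ≤
        Module.finrank ℝ
          ↥(LinearMap.ker
            (Matrix.toLin'
              (Lt - (((n j : ℝ) * w j + (n i : ℝ) * wt j) / dt j) • Dt))) := by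
  intro j hj
  classical
  set lam : ℝ := ((n j : ℝ) * w j + (n i : ℝ) * wt j) / dt j with hlam
  have hcard : ∀ k, (Finset.univ.filter (fun m => β m = k)).card = n k :=
    block_card_aux K N n hN β hβ
  have hnj : (2:ℝ) ≤ (n j : ℝ) := by exact_mod_cast hn j
  have hni : (0:ℝ) < (n i : ℝ) := by
    have := hn i; positivity
  have hdtpos : 0 < dt j := by
    rw [hdtj j hj]
    have h1 := hw j
    have h2 := hwt j hj
    nlinarith
  have hlamdt : lam * dt j = dt j + w j := by
    rw [hlam, div_mul_cancel₀ _ (ne_of_gt hdtpos), hdtj j hj]; ring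
  -- row sums on block j
  have hrow : ∀ m : Fin N, β m = j → (∑ q, Wt m q) = dt j := by
    intro m hm
    have hptwise : ∀ q, Wt m q =
        (if β q = j then W m q else 0) + (if β q = i then wt j else 0) := by
      intro q
      rw [hWt m q, hm]
      by_cases h1 : β q = j
      · rw [if_pos h1.symm, if_pos h1, if_neg (h1 ▸ hj : ¬ β q = i), add_zero]
      · rw [if_neg (fun h => h1 h.symm), if_neg h1, if_neg hj, zero_add]
    rw [Finset.sum_congr rfl (fun q _ => hptwise q), Finset.sum_add_distrib]
    have hmS : m ∈ Finset.univ.filter (fun q => β q = j) := by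
      simp [hm]
    have hA : (∑ q, if β q = j then W m q else 0) = ((n j : ℝ) - 1) * w j := by
      rw [← Finset.sum_filter, ← Finset.add_sum_erase _ _ hmS]
      have hWmm : W m m = 0 := by rw [hW]; simp
      have hWq : ∀ q ∈ (Finset.univ.filter (fun q => β q = j)).erase m, W m q = w j := by
        intro q hq
        obtain ⟨hqm, hqS⟩ := Finset.mem_erase.mp hq
        simp only [Finset.mem_filter, Finset.mem_univ, true_and] at hqS
        rw [hW]
        rw [if_pos ⟨fun h => hqm h.symm, by rw [hm, hqS]⟩, hm]
      rw [hWmm, zero_add, Finset.sum_congr rfl hWq, Finset.sum_const,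
        Finset.card_erase_of_mem hmS, hcard j, nsmul_eq_mul]
      have : ((n j - 1 : ℕ) : ℝ) = (n j : ℝ) - 1 := by
        have := hn j
        push_cast [Nat.cast_sub (by omega : 1 ≤ n j)]
        ring
      rw [this]
    have hB : (∑ q, if β q = i then wt j else 0) = (n i : ℝ) * wt j := by
      rw [← Finset.sum_filter, Finset.sum_const, hcard i, nsmul_eq_mul]
    rw [hA, hB, hdtj j hj]
  -- kernel membership of difference vectors
  have hker : ∀ m m₀ : Fin N, β m = j → β m₀ = j → m ≠ m₀ →
      (Pi.single m 1 - Pi.single m₀ (1:ℝ)) ∈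
        LinearMap.ker (Matrix.toLin' (Lt - lam • Dt)) := by
    intro m m₀ hm hm₀ hne
    rw [LinearMap.mem_ker, Matrix.toLin'_apply, Matrix.mulVec_sub,
      Matrix.mulVec_single, Matrix.mulVec_single]
    funext p
    simp only [Pi.sub_apply, Pi.zero_apply, mul_one, MulOpposite.op_one, one_smul, Matrix.col_apply]
    have hent : ∀ p q, (Lt - lam • Dt) p q = Dt p q - Wt p q - lam * Dt p q := by
      intro p q
      simp [hLt, Matrix.sub_apply, Matrix.smul_apply, smul_eq_mul]
    rw [hent, hent]
    have hDtd : ∀ p q : Fin N, p ≠ q → Dt p q = 0 := by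
      intro p q hpq
      rw [hDt]; exact Matrix.diagonal_apply_ne _ hpq
    by_cases hpm : p = m
    · subst hpm
      have h1 : Dt p p = dt j := by rw [hDt, Matrix.diagonal_apply_eq, hrow p hm]
      have h2 : Dt p m₀ = 0 := hDtd p m₀ hne
      have h3 : Wt p p = 0 := by rw [hWt, if_pos rfl, hW]; simp
      have h4 : Wt p m₀ = w j := by
        rw [hWt, if_pos (by rw [hm, hm₀]), hW, if_pos ⟨hne, by rw [hm, hm₀]⟩, hm]
      rw [h1, h2, h3, h4]
      linarith [hlamdt]
    · by_cases hpm₀ : p = m₀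
      · subst hpm₀
        have h1 : Dt p p = dt j := by rw [hDt, Matrix.diagonal_apply_eq, hrow p hm₀]
        have h2 : Dt p m = 0 := hDtd p m hpm
        have h3 : Wt p p = 0 := by rw [hWt, if_pos rfl, hW]; simp
        have h4 : Wt p m = w j := by
          rw [hWt, if_pos (by rw [hm, hm₀]), hW,
            if_pos ⟨fun h => hne h.symm, by rw [hm, hm₀]⟩, hm₀]
        rw [h1, h2, h3, h4]
        linarith [hlamdt]
      · have h1 : Dt p m = 0 := hDtd p m hpm
        have h2 : Dt p m₀ = 0 := hDtd p m₀ hpm₀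
        have h3 : Wt p m = Wt p m₀ := by
          rw [hWt, hWt, hm, hm₀]
          by_cases hb : β p = j
          · rw [if_pos hb, if_pos hb, hW, hW,
              if_pos ⟨hpm, by rw [hb, hm]⟩, if_pos ⟨hpm₀, by rw [hb, hm₀]⟩]
          · rw [if_neg hb, if_neg hb]
        rw [h1, h2, h3]
        ring
  -- the linearly independent family
  set S : Finset (Fin N) := Finset.univ.filter (fun m => β m = j) with hS
  have hScard : S.card = n j := hcard j
  have hSne : S.Nonempty := by
    rw [← Finset.card_pos, hScard]; have := hn j; omega
  obtain ⟨m₀, hm₀S⟩ := hSne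
  have hβm₀ : β m₀ = j := by
    have := hm₀S; simp only [hS, Finset.mem_filter, Finset.mem_univ, true_and] at this
    exact this
  set T : Finset (Fin N) := S.erase m₀ with hT
  have hTcard : T.card = n j - 1 := by
    rw [hT, Finset.card_erase_of_mem hm₀S, hScard]
  have hmemT : ∀ t : Fin N, t ∈ T → β t = j ∧ t ≠ m₀ := by
    intro t ht
    obtain ⟨h1, h2⟩ := Finset.mem_erase.mp ht
    simp only [hS, Finset.mem_filter, Finset.mem_univ, true_and] at h2
    exact ⟨h2, h1⟩
  set v : {x // x ∈ T} → (Fin N → ℝ) :=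
    fun t => Pi.single (t : Fin N) 1 - Pi.single m₀ 1 with hv
  have hvker : ∀ t : {x // x ∈ T},
      v t ∈ LinearMap.ker (Matrix.toLin' (Lt - lam • Dt)) := by
    intro t
    exact hker t m₀ (hmemT t t.2).1 hβm₀ (hmemT t t.2).2
  have hli : LinearIndependent ℝ v := by
    rw [Fintype.linearIndependent_iff]
    intro g hg t
    have hev := congrFun hg (t : Fin N)
    have ht : (t : Fin N) ≠ m₀ := (hmemT t t.2).2
    simp only [hv, Finset.sum_apply, Pi.smul_apply, Pi.sub_apply, Pi.single_apply,
      smul_eq_mul, if_neg ht, sub_zero, Pi.zero_apply] at hev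
    have : ∀ x : {y // y ∈ T}, g x * (if (t : Fin N) = (x : Fin N) then (1:ℝ) else 0)
        = if t = x then g x else 0 := by
      intro x
      by_cases h : t = x
      · rw [if_pos (by rw [h]), if_pos h, mul_one]
      · rw [if_neg (fun hc => h (Subtype.ext hc)), if_neg h, mul_zero]
    rw [Finset.sum_congr rfl (fun x _ => this x), Finset.sum_ite_eq] at hev
    simpa using hev
  -- conclude
  set u : {x // x ∈ T} → ↥(LinearMap.ker (Matrix.toLin' (Lt - lam • Dt))) :=
    fun t => ⟨v t, hvker t⟩ with hu
  have hliu : LinearIndependent ℝ u := by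
    apply LinearIndependent.of_comp (LinearMap.ker (Matrix.toLin' (Lt - lam • Dt))).subtype
    exact hli
  have hfin := hliu.fintype_card_le_finrank
  rw [Fintype.card_coe, hTcard] at hfin
  exact hfin
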